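/- Let Q ⊂ ℝ^m be a lattice polytope with vertices v₁,…,v_k that is not 2-normal, and let u ∈ (2Q) ∩ ℤ^m be a lattice point that is not a sum of two lattice points of Q. Choose r₁,…,r_k ∈ ℕ with r₁ + ⋯ + r_k > 0 and (r₁+⋯+r_k)u = 2r₁v₁ + ⋯ + 2r_kv_k. Then the Laurent polynomial f = r₁z^{2v₁} + ⋯ + r_kz^{2v_k} − (r₁+⋯+r_k)z^u is nonnegative on the positive real torus (ℝ_{>0})^m (indeed on (ℝ^*)^m) but is not a sum of squares of Laurent polynomials with Newton polytope contained in Q. -/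

import Mathlib

lemma zpow_finset_sum_aux {ι : Type*} {a : ℝ} (ha : a ≠ 0) (s : Finset ι) (f : ι → ℤ) :
    a ^ (∑ i ∈ s, f i) = ∏ i ∈ s, a ^ f i := by
  classical
  induction s using Finset.induction with
  | empty => simp
  | insert _ _ h ih => rw [Finset.sum_insert h, Finset.prod_insert h, zpow_add₀ ha, ih]

open Finsupp in
/-- If `Q` is the convex hull of lattice points `v₁,…,v_k`, `u ∈ (2Q) ∩ ℤ^m` is
not a sum of two lattice points of `Q`, and `(∑rᵢ)·u = ∑ 2rᵢvᵢ` with `rᵢ ∈ ℕ`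
not all zero, then `f = ∑ rᵢ z^{2vᵢ} − (∑rᵢ) z^u` is nonnegative on the real
torus but is not a sum of squares of Laurent polynomials with Newton polytope
contained in `Q`. -/
theorem non_two_normal_gives_nonneg_not_sos (m k : ℕ)
    (v : Fin k → (Fin m → ℤ)) (u : Fin m → ℤ)
    (ι : (Fin m → ℤ) → (Fin m → ℝ)) (hι : ι = fun w i => (w i : ℝ))
    (Q : Set (Fin m → ℝ)) (hQ : Q = convexHull ℝ (ι '' Set.range v))
    (hu2Q : (2 : ℝ)⁻¹ • ι u ∈ Q)
    (hunotsum : ¬ ∃ a b : Fin m → ℤ, ι a ∈ Q ∧ ι b ∈ Q ∧ u = a + b)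
    (r : Fin k → ℕ) (hrpos : 0 < ∑ i, r i)
    (hrel : (∑ i, r i) • u = ∑ i, (2 * r i) • v i) :
    (∀ z : Fin m → ℝ, (∀ i, z i ≠ 0) →
      0 ≤ ∑ i, (r i : ℝ) * ∏ j, z j ^ (2 * v i j)
            - (∑ i, (r i : ℝ)) * ∏ j, z j ^ u j) ∧
    ¬ ∃ (N : ℕ) (g : Fin N → AddMonoidAlgebra ℝ (Fin m → ℤ)),
        (∀ j, ∀ w ∈ (g j).coeff.support, ι w ∈ Q) ∧
        (∑ i, Finsupp.single (2 • v i) (r i : ℝ))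
            - Finsupp.single u ((∑ i, r i : ℕ) : ℝ) = (∑ j, g j * g j).coeff := by
  have hvQ : ∀ i, ι (v i) ∈ Q := by
    intro i
    rw [hQ]
    exact subset_convexHull ℝ _ ⟨v i, ⟨i, rfl⟩, rfl⟩
  set s : ℕ := ∑ i, r i with hs
  have hsR : (0 : ℝ) < (s : ℝ) := by exact_mod_cast hrpos
  constructor
  · intro z hz
    set p : Fin k → ℝ := fun i => ∏ j, z j ^ (2 * v i j) with hp
    have hppos : ∀ i, 0 < p i := by
      intro i
      refine Finset.prod_pos fun j _ => ?_
      rw [zpow_mul]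
      exact zpow_pos (by rw [zpow_two]; exact mul_self_pos.mpr (hz j)) _
    set P : ℝ := ∏ j, z j ^ u j with hP
    have key : ∏ i, p i ^ r i = P ^ s := by
      have : ∀ i, p i ^ r i = ∏ j, z j ^ (2 * v i j * (r i : ℤ)) := by
        intro i
        rw [hp, ← Finset.prod_pow]
        exact Finset.prod_congr rfl fun j _ => by
          rw [← zpow_natCast (z j ^ (2 * v i j)) (r i), ← zpow_mul]
      simp_rw [this]
      rw [Finset.prod_comm]
      have hPs : P ^ s = ∏ j, z j ^ ((u j) * (s : ℤ)) := by
        rw [hP, ← Finset.prod_pow]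
        exact Finset.prod_congr rfl fun j _ => by
          rw [← zpow_natCast (z j ^ u j) s, ← zpow_mul]
      rw [hPs]
      refine Finset.prod_congr rfl fun j _ => ?_
      rw [← zpow_finset_sum_aux (hz j)]
      congr 1
      have := congrFun hrel j
      simp only [Pi.smul_apply, Finset.sum_apply] at this
      rw [nsmul_eq_mul] at this
      simp only [nsmul_eq_mul] at this
      push_cast at this ⊢
      rw [mul_comm (u j) ((s : ℤ)), this]
      exact Finset.sum_congr rfl fun i _ => by ring
    have hPsnn : (0 : ℝ) ≤ P ^ s := key ▸ Finset.prod_nonneg fun i _ => pow_nonneg (hppos i).le _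
    have habs : |P| ^ s = P ^ s := by
      rw [← abs_pow, abs_of_nonneg hPsnn]
    have hsum : ∑ i, ((r i : ℝ)) = (s : ℝ) := by rw [hs]; exact (Nat.cast_sum _ _).symm
    have hamgm := Real.geom_mean_le_arith_mean Finset.univ (fun i => (r i : ℝ)) p
      (fun i _ => by positivity) (by rw [hsum]; exact hsR)
      (fun i _ => (hppos i).le)
    simp only [hsum] at hamgm
    have hgm : (∏ i, p i ^ ((r i : ℕ) : ℝ)) ^ ((s : ℝ))⁻¹ = |P| := by
      have h1 : ∏ i, p i ^ ((r i : ℕ) : ℝ) = P ^ s := by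
        rw [← key]
        exact Finset.prod_congr rfl fun i _ => Real.rpow_natCast _ _
      rw [h1, ← habs, ← Real.rpow_natCast |P| s, ← Real.rpow_mul (abs_nonneg P),
        mul_inv_cancel₀ (ne_of_gt hsR), Real.rpow_one]
    rw [hgm] at hamgm
    have h3 : |P| * (s : ℝ) ≤ ∑ i, (r i : ℝ) * p i := (le_div_iff₀ hsR).mp hamgm
    have h2 : (∑ i, (r i : ℝ)) * P ≤ ∑ i, (r i : ℝ) * p i := by
      rw [hsum]
      nlinarith [le_abs_self P]
    linarith
  · rintro ⟨N, g, hsupp, heq⟩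
    have h := DFunLike.congr_fun heq u
    rw [Finsupp.sub_apply] at h
    have hL1 : ((∑ i, Finsupp.single (2 • v i) (r i : ℝ)) : (Fin m → ℤ) →₀ ℝ) u = 0 := by
      rw [Finsupp.finset_sum_apply]
      refine Finset.sum_eq_zero fun i _ => ?_
      rw [Finsupp.single_apply, if_neg]
      intro hvi
      exact hunotsum ⟨v i, v i, hvQ i, hvQ i, by rw [← hvi, two_nsmul]⟩
    have hL2 : (Finsupp.single u ((s : ℕ) : ℝ) : (Fin m → ℤ) →₀ ℝ) u = (s : ℝ) :=
      Finsupp.single_eq_same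
    have hR : ((∑ j, g j * g j : AddMonoidAlgebra ℝ (Fin m → ℤ))).coeff u = 0 := by
      rw [AddMonoidAlgebra.coeff_sum, Finsupp.finset_sum_apply]
      refine Finset.sum_eq_zero fun j _ => ?_
      classical
      rw [AddMonoidAlgebra.coeff_mul, Finsupp.sum]
      refine Finset.sum_eq_zero fun a ha => ?_
      rw [Finsupp.sum]
      refine Finset.sum_eq_zero fun b hb => ?_
      rw [if_neg]
      intro hab
      exact hunotsum ⟨a, b, hsupp j a ha, hsupp j b hb, hab.symm⟩
    rw [hL1, hL2, hR] at h
    have : (0:ℝ) < (s : ℝ) := hsR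
    linarith
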